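/- Let AF be a finite argumentation framework. Every admissible set of AF is contained in a complete extension E with (S ∪ S⁺) ⊆ (E ∪ E⁺); in particular, for every admissible set S there is a complete extension whose range contains the range of S. -/

import Mathlib

/- Argumentation framework notions over argument type `A` with attack relation `att`. -/
section AF
variable {A : Type*}

/-- `S⁺`: the set of arguments attacked by `S`. -/
def plusSet (att : A → A → Prop) (S : Set A) : Set A := {b | ∃ a ∈ S, att a b}

/-- The range of `S`: `S ∪ S⁺`. -/
def rangeOf (att : A → A → Prop) (S : Set A) : Set A := S ∪ plusSet att S

def conflictFree (att : A → A → Prop) (S : Set A) : Prop :=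
  ∀ a ∈ S, ∀ b ∈ S, ¬ att a b

def acceptable (att : A → A → Prop) (S : Set A) (a : A) : Prop :=
  ∀ b, att b a → ∃ c ∈ S, att c b

def admissible (att : A → A → Prop) (S : Set A) : Prop :=
  conflictFree att S ∧ ∀ a ∈ S, acceptable att S a

def completeExt (att : A → A → Prop) (S : Set A) : Prop :=
  admissible att S ∧ ∀ a, acceptable att S a → a ∈ S

def preferredExt (att : A → A → Prop) (S : Set A) : Prop :=
  admissible att S ∧ ∀ T, admissible att T → S ⊆ T → T = S

def stableExt (att : A → A → Prop) (S : Set A) : Prop :=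
  conflictFree att S ∧ ∀ b, b ∉ S → ∃ a ∈ S, att a b

def semiStableExt (att : A → A → Prop) (S : Set A) : Prop :=
  completeExt att S ∧ ∀ T, completeExt att T →
    rangeOf att S ⊆ rangeOf att T → rangeOf att T ⊆ rangeOf att S

def stageExt (att : A → A → Prop) (S : Set A) : Prop :=
  conflictFree att S ∧ ∀ T, conflictFree att T →
    rangeOf att S ⊆ rangeOf att T → rangeOf att T ⊆ rangeOf att S

end AF

/- Normal logic programs. -/
section LP
variable {α : Type*}

structure Clause (α : Type*) where
  head : α
  pos : Set α
  neg : Set α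

/-- `M` satisfies clause `C` read classically (`not` = classical negation). -/
def satClause (M : Set α) (C : Clause α) : Prop :=
  (C.pos ⊆ M ∧ C.neg ∩ M = ∅) → C.head ∈ M

/-- `M` is a 2-valued classical model of the program `P`. -/
def isModel (M : Set α) (P : Set (Clause α)) : Prop := ∀ C ∈ P, satClause M C

/-- Gelfond–Lifschitz reduct `P^M`. -/
def glReduct (P : Set (Clause α)) (M : Set α) : Set (Clause α) :=
  {C' | ∃ C ∈ P, C.neg ∩ M = ∅ ∧ C' = ⟨C.head, C.pos, ∅⟩}

/-- The facts of a program. -/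
def facts (P : Set (Clause α)) : Set α :=
  {a | ∃ C ∈ P, C.head = a ∧ C.pos = ∅ ∧ C.neg = ∅}

def supportedModel (M : Set α) (P : Set (Clause α)) : Prop :=
  isModel M P ∧ ∀ a ∈ M, ∃ C ∈ P, C.head = a ∧ C.pos ⊆ M ∧ C.neg ∩ M = ∅

/-- `M` is a stable model of `P`: a ⊆-minimal model of `P^M`. -/
def stableModel (M : Set α) (P : Set (Clause α)) : Prop :=
  isModel M (glReduct P M) ∧ ∀ N ⊆ M, isModel N (glReduct P M) → N = M

/-- The reduction `RED(P,M)`. -/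
def red (P : Set (Clause α)) (M : Set α) : Set (Clause α) :=
  {C' | ∃ C ∈ P, C' = ⟨C.head, C.pos, C.neg ∩ M⟩}

/-- `M` is a p-stable model of `P`. -/
def pStableModel (M : Set α) (P : Set (Clause α)) : Prop :=
  isModel M (red P M) ∧ ∀ a ∈ M, ∀ I : Set α, isModel I (red P M) → a ∈ I

/-- Atoms occurring in `P`. -/
def atomsOf (P : Set (Clause α)) : Set α :=
  ⋃ C ∈ P, ({C.head} ∪ C.pos ∪ C.neg)

end LP

/- The mappings `Π_AF⁻` and `Π_AF`; the atom `def(x)` is identified with `x`,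
so the signature `{def(x) | x ∈ AR}` is `Set.univ`. -/
section Maps
variable {A : Type*}

def piMinus (att : A → A → Prop) : Set (Clause A) :=
  {C | ∃ a b, att b a ∧ C = ⟨a, ∅, {b}⟩}

def piAF (att : A → A → Prop) : Set (Clause A) :=
  piMinus att ∪ {C | ∃ a b, att b a ∧ C = ⟨a, {c | att c b}, ∅⟩}

/-- `Facts(P^M) ∪ (L \ M)`, with `L = {def(x) | x ∈ AR} = Set.univ`. -/
def scSet (P : Set (Clause A)) (M : Set A) : Set A := facts (glReduct P M) ∪ Mᶜ

/-- GL-supported model of `Π_AF`. -/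
def glSupportedModel (att : A → A → Prop) (M : Set A) : Prop :=
  supportedModel M (piAF att) ∧ ∀ N, supportedModel N (piAF att) →
    scSet (piAF att) M ⊆ scSet (piAF att) N → scSet (piAF att) N ⊆ scSet (piAF att) M

/-- GL-stage model of `Π_AF⁻`. -/
def glStageModel (att : A → A → Prop) (M : Set A) : Prop :=
  isModel M (piMinus att) ∧ ∀ N, isModel N (piMinus att) →
    scSet (piMinus att) M ⊆ scSet (piMinus att) N → scSet (piMinus att) N ⊆ scSet (piMinus att) M

end Maps

lemma fund_lemma {A : Type*} (att : A → A → Prop) (S : Set A) (h : admissible att S)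
    (a : A) (ha : acceptable att S a) : admissible att (insert a S) := by
  obtain ⟨cf, acc⟩ := h
  constructor
  · intro x hx y hy hxy
    rcases hx with rfl | hx <;> rcases hy with rfl | hy
    · obtain ⟨c, hc, hca⟩ := ha y hxy
      obtain ⟨d, hd, hdc⟩ := ha c hca
      exact cf d hd c hc hdc
    · obtain ⟨c, hc, hca⟩ := acc y hy x hxy
      obtain ⟨d, hd, hdc⟩ := ha c hca
      exact cf d hd c hc hdc
    · obtain ⟨c, hc, hcx⟩ := ha x hxy
      exact cf c hc x hx hcx
    · exact cf x hx y hy hxy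
  · intro x hx b hb
    rcases hx with rfl | hx
    · obtain ⟨c, hc, hcb⟩ := ha b hb
      exact ⟨c, Set.mem_insert_of_mem _ hc, hcb⟩
    · obtain ⟨c, hc, hcb⟩ := acc x hx b hb
      exact ⟨c, Set.mem_insert_of_mem _ hc, hcb⟩

theorem stmt16 {A : Type*} [Finite A] (att : A → A → Prop) (S : Set A)
    (h : admissible att S) :
    ∃ E, completeExt att E ∧ S ⊆ E ∧ rangeOf att S ⊆ rangeOf att E := by
  classical
  set 𝒮 : Set (Set A) := {T | admissible att T ∧ S ⊆ T} with h𝒮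
  have hfin : 𝒮.Finite := Set.toFinite _
  have hne : 𝒮.Nonempty := ⟨S, h, subset_rfl⟩
  obtain ⟨E, hE, hmax⟩ : ∃ E ∈ 𝒮, ∀ T ∈ 𝒮, id E ≤ id T → id E = id T := by
    obtain ⟨E, -, hEm⟩ := Set.Finite.exists_le_maximal hfin (show S ∈ 𝒮 from ⟨h, subset_rfl⟩)
    exact ⟨E, hEm.prop, fun T hT hle => le_antisymm hle (hEm.2 hT hle)⟩
  refine ⟨E, ⟨hE.1, ?_⟩, hE.2, ?_⟩
  · intro a ha
    have hadm : admissible att (insert a E) := fund_lemma att E hE.1 a ha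
    have : E = insert a E :=
      hmax (insert a E) ⟨hadm, hE.2.trans (Set.subset_insert a E)⟩
        (Set.subset_insert a E)
    rw [this]; exact Set.mem_insert a E
  · intro x hx
    rcases hx with hx | ⟨c, hc, hcx⟩
    · exact Or.inl (hE.2 hx)
    · exact Or.inr ⟨c, hE.2 hc, hcx⟩
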